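/- Fix reals β > 0, c > 0, σ > 0, σθ > 0 and define F(α) = β·σθ²·α² + (c·σ² + c·β²·σθ² − σθ²)·α − c·β·σθ². Let α > 0 satisfy F(α) = 0, and set K₁ = (c·β + α)/(c + α²) and K₂ = c·σ/(c + α²). Then σθ² − (K₁·σθ²)²/(K₁²·σθ² + K₂²) = c·(1 − β·α)·σθ²/(c + α²). -/

import Mathlib

/-- The posterior-variance formula (equation (9)) in the Gaussian-quadratic
benchmark: with `K₁ = (cβ + α)/(c + α²)` and `K₂ = cσ/(c + α²)`, the residual
posterior variance `σθ² − (K₁σθ²)²/(K₁²σθ² + K₂²)` equals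
`c(1 − βα)σθ²/(c + α²)`. -/
theorem posterior_variance_formula
    (β c σ σθ α : ℝ) (hβ : 0 < β) (hc : 0 < c) (hσ : 0 < σ) (hσθ : 0 < σθ)
    (hα : 0 < α)
    (hroot : β * σθ ^ 2 * α ^ 2 + (c * σ ^ 2 + c * β ^ 2 * σθ ^ 2 - σθ ^ 2) * α
      - c * β * σθ ^ 2 = 0) :
    σθ ^ 2 -
        ((c * β + α) / (c + α ^ 2) * σθ ^ 2) ^ 2 /
          (((c * β + α) / (c + α ^ 2)) ^ 2 * σθ ^ 2 +
            (c * σ / (c + α ^ 2)) ^ 2) =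
      c * (1 - β * α) * σθ ^ 2 / (c + α ^ 2) := by
  have hD : (0:ℝ) < c + α ^ 2 := by positivity
  have hE : (0:ℝ) < ((c * β + α) / (c + α ^ 2)) ^ 2 * σθ ^ 2 +
      (c * σ / (c + α ^ 2)) ^ 2 := by positivity
  field_simp [hD.ne', hE.ne']
  linear_combination (c * (α + β * c)) * hroot
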